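/- arXiv:2103.15033 — 2 statements merged into one kernel-verified Lean document; each statement's English description precedes it below -/
import Mathlib

section
/- Let M : ℝⁿ → ℝ^{n×n} be a uniformly bounded C¹ metric, a₁I ⪯ M(x) ⪯ a₂I with a₁ > 0, satisfying the contraction inequality Ṁ + (Df)ᵀM + M(Df) ⪯ −ρM for some ρ > 0 along the forward-complete autonomous system ẋ = f(x), f C¹. Then any two solutions converge exponentially: |X(x_a,t) − X(x_b,t)| ≤ √(a₂/a₁) |x_a − x_b| e^{−ρt/2} for all x_a, x_b ∈ ℝⁿ and t ≥ 0. -/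
open Matrix MeasureTheory Set Filter Topology

/-- Jacobian matrix of a map between finite-dimensional spaces. -/
noncomputable def jac {n N : ℕ} (φ : (Fin n → ℝ) → (Fin N → ℝ)) (x : Fin n → ℝ) :
    Matrix (Fin N) (Fin n) ℝ :=
  Matrix.of fun i j => fderiv ℝ φ x (Pi.single j 1) i

/-- A real square matrix is Hurwitz if all its (complex) eigenvalues have
negative real part. -/
def Hurwitz {N : ℕ} (A : Matrix (Fin N) (Fin N) ℝ) : Prop :=
  ∀ μ ∈ spectrum ℂ (A.map (Complex.ofReal ·)), μ.re < 0

/-- Euclidean norm on `Fin n → ℝ`. -/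
noncomputable def euclNorm {n : ℕ} (x : Fin n → ℝ) : ℝ :=
  Real.sqrt (∑ i, x i ^ 2)

section Helpers

variable {n : ℕ}

lemma euclNorm_eq_norm (v : Fin n → ℝ) :
    euclNorm v = ‖(EuclideanSpace.equiv (Fin n) ℝ).symm v‖ := by
  simp [euclNorm, EuclideanSpace.norm_eq, Real.sqrt_eq_iff_eq_sq, sq_abs]

lemma euclNorm_nonneg (v : Fin n → ℝ) : 0 ≤ euclNorm v := Real.sqrt_nonneg _

lemma euclNorm_sq (v : Fin n → ℝ) : euclNorm v ^ 2 = ∑ i, v i ^ 2 := by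
  rw [euclNorm, Real.sq_sqrt]; positivity

lemma euclNorm_add_le (a b : Fin n → ℝ) : euclNorm (a + b) ≤ euclNorm a + euclNorm b := by
  simp only [euclNorm_eq_norm, map_add]; exact norm_add_le _ _

lemma euclNorm_smul (c : ℝ) (v : Fin n → ℝ) : euclNorm (c • v) = |c| * euclNorm v := by
  simp only [euclNorm_eq_norm, _root_.map_smul, norm_smul, Real.norm_eq_abs]

lemma euclNorm_neg (v : Fin n → ℝ) : euclNorm (-v) = euclNorm v := by
  simpa using euclNorm_smul (-1) v

lemma euclNorm_sub_rev (a b : Fin n → ℝ) : euclNorm (a - b) = euclNorm (b - a) := by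
  rw [← euclNorm_neg]; congr 1; abel

lemma abs_le_euclNorm (v : Fin n → ℝ) (i : Fin n) : |v i| ≤ euclNorm v := by
  rw [euclNorm, ← Real.sqrt_sq_eq_abs]
  apply Real.sqrt_le_sqrt
  exact Finset.single_le_sum (f := fun i => v i ^ 2) (fun j _ => sq_nonneg _) (Finset.mem_univ i)

lemma pinorm_le_euclNorm (v : Fin n → ℝ) : ‖v‖ ≤ euclNorm v := by
  apply pi_norm_le_iff_of_nonneg (euclNorm_nonneg v) |>.2
  intro i
  rw [Real.norm_eq_abs]; exact abs_le_euclNorm v i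

lemma dotProduct_self_eq (v : Fin n → ℝ) : v ⬝ᵥ v = euclNorm v ^ 2 := by
  rw [euclNorm_sq, dotProduct]; congr 1; ext i; ring

lemma quad_single_pair (A : Matrix (Fin n) (Fin n) ℝ) (i j : Fin n) (c : ℝ) :
    ((Pi.single i 1 : Fin n → ℝ) + c • (Pi.single j 1 : Fin n → ℝ)) ⬝ᵥ
      (A *ᵥ ((Pi.single i 1 : Fin n → ℝ) + c • (Pi.single j 1 : Fin n → ℝ)))
    = A i i + c * A i j + c * A j i + c * c * A j j := by
  simp only [mulVec_add, mulVec_smul, Matrix.mulVec_single, add_dotProduct, smul_dotProduct,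
    dotProduct_add, dotProduct_smul]
  simp [dotProduct, Pi.single_apply, mul_comm]
  ring

lemma psd_quad {A : Matrix (Fin n) (Fin n) ℝ} (h : A.PosSemidef) (v : Fin n → ℝ) :
    0 ≤ v ⬝ᵥ (A *ᵥ v) := by simpa using h.dotProduct_mulVec_nonneg v

lemma entry_abs_le {A : Matrix (Fin n) (Fin n) ℝ} (hA : A.PosSemidef) {a₂ : ℝ}
    (hd : ∀ i, A i i ≤ a₂) (i j : Fin n) : |A i j| ≤ a₂ := by
  have hsym : A j i = A i j := by
    have h := hA.1
    rw [Matrix.IsHermitian] at h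
    conv_lhs => rw [← h]
    simp [Matrix.conjTranspose_apply]
  have h1 := psd_quad hA ((Pi.single i 1 : Fin n → ℝ) + (1:ℝ) • (Pi.single j 1 : Fin n → ℝ))
  have h2 := psd_quad hA ((Pi.single i 1 : Fin n → ℝ) + (-1:ℝ) • (Pi.single j 1 : Fin n → ℝ))
  rw [quad_single_pair] at h1 h2
  have hii := hd i
  have hjj := hd j
  rw [abs_le]
  constructor <;> nlinarith [hsym]

lemma dot_mulVec_abs_le {A : Matrix (Fin n) (Fin n) ℝ} {a₂ : ℝ} (ha₂ : 0 ≤ a₂)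
    (hA : ∀ i j, |A i j| ≤ a₂) (u w : Fin n → ℝ) :
    |u ⬝ᵥ (A *ᵥ w)| ≤ a₂ * ((∑ i, |u i|) * (∑ j, |w j|)) := by
  calc |u ⬝ᵥ (A *ᵥ w)| ≤ ∑ i, |u i * (A *ᵥ w) i| := Finset.abs_sum_le_sum_abs _ _
    _ ≤ ∑ i, |u i| * (a₂ * ∑ j, |w j|) := by
        apply Finset.sum_le_sum
        intro i _
        rw [abs_mul]
        apply mul_le_mul_of_nonneg_left _ (abs_nonneg _)
        have h1 : (A *ᵥ w) i = ∑ j, A i j * w j := by simp [mulVec, dotProduct]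
        rw [h1]
        calc |∑ j, A i j * w j| ≤ ∑ j, |A i j * w j| := Finset.abs_sum_le_sum_abs _ _
          _ ≤ ∑ j, a₂ * |w j| := by
              apply Finset.sum_le_sum
              intro j _
              rw [abs_mul]
              exact mul_le_mul_of_nonneg_right (hA i j) (abs_nonneg _)
          _ = a₂ * ∑ j, |w j| := by rw [Finset.mul_sum]
    _ = a₂ * ((∑ i, |u i|) * (∑ j, |w j|)) := by rw [← Finset.sum_mul]; ring

lemma jac_mulVec (f : (Fin n → ℝ) → (Fin n → ℝ)) (x v : Fin n → ℝ) :
    (jac f x) *ᵥ v = fderiv ℝ f x v := by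
  funext i
  have hv : v = ∑ j, v j • (Pi.single j (1:ℝ) : Fin n → ℝ) := by
    funext k; simp [Pi.single_apply]
  rw [mulVec]
  show ∑ j, jac f x i j * v j = _
  conv_rhs => rw [hv]
  rw [map_sum]
  simp [jac, mul_comm, Finset.sum_apply]

lemma contr_quad (Mx Md J : Matrix (Fin n) (Fin n) ℝ) (ρ : ℝ) (v : Fin n → ℝ)
    (h : (-(ρ • Mx) - (Md + Jᵀ * Mx + Mx * J)).PosSemidef) :
    v ⬝ᵥ (Md *ᵥ v) + (J *ᵥ v) ⬝ᵥ (Mx *ᵥ v) + v ⬝ᵥ (Mx *ᵥ (J *ᵥ v))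
      ≤ -ρ * (v ⬝ᵥ (Mx *ᵥ v)) := by
  have h0 : (0:ℝ) ≤ v ⬝ᵥ ((-(ρ • Mx) - (Md + Jᵀ * Mx + Mx * J)) *ᵥ v) := by
    simpa using h.dotProduct_mulVec_nonneg v
  rw [sub_mulVec, add_mulVec, add_mulVec, neg_mulVec, smul_mulVec,
    dotProduct_sub, dotProduct_add, dotProduct_add, dotProduct_neg, dotProduct_smul,
    ← Matrix.mulVec_mulVec, ← Matrix.mulVec_mulVec (M := Mx) (N := J),
    Matrix.dotProduct_mulVec (v := v) (A := Jᵀ), Matrix.vecMul_transpose] at h0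
  simp only [smul_eq_mul] at h0
  linarith

lemma chord_estimate (f : (Fin n → ℝ) → (Fin n → ℝ)) (hf : ContDiff ℝ 1 f)
    {ε : ℝ} (p q : Fin n → ℝ)
    (hKd : ∀ y ∈ segment ℝ p q, ‖fderiv ℝ f y - fderiv ℝ f p‖ ≤ ε) :
    ‖f q - f p - fderiv ℝ f p (q - p)‖ ≤ ε * ‖q - p‖ := by
  set A := fderiv ℝ f p with hA
  set g : (Fin n → ℝ) → (Fin n → ℝ) := fun y => f y - A y with hg
  have hgd : ∀ y ∈ segment ℝ p q, HasFDerivWithinAt g (fderiv ℝ f y - A) (segment ℝ p q) y := by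
    intro y _
    exact (((hf.differentiable one_ne_zero y).hasFDerivAt).sub (A.hasFDerivAt)).hasFDerivWithinAt
  have := (convex_segment p q).norm_image_sub_le_of_norm_hasFDerivWithin_le
    hgd hKd (left_mem_segment ℝ p q) (right_mem_segment ℝ p q)
  calc ‖f q - f p - A (q - p)‖ = ‖g q - g p‖ := by
        simp [hg, map_sub]
        abel_nf
      _ ≤ ε * ‖q - p‖ := this

lemma gronwall_exp_decay {V V' : ℝ → ℝ} {lam t₁ : ℝ}
    (hV : ∀ t ∈ Icc (0:ℝ) t₁, HasDerivAt V (V' t) t)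
    (hle : ∀ t ∈ Icc (0:ℝ) t₁, V' t ≤ -lam * V t) :
    ∀ t ∈ Icc (0:ℝ) t₁, V t ≤ V 0 * Real.exp (-lam * t) := by
  intro t ht
  set W : ℝ → ℝ := fun s => V s * Real.exp (lam * s) with hW
  have hW' : ∀ s ∈ Icc (0:ℝ) t₁, HasDerivAt W ((V' s + lam * V s) * Real.exp (lam * s)) s := by
    intro s hs
    have h1 : HasDerivAt (fun s => V s * Real.exp (lam * s)) _ s := (hV s hs).mul ((Real.hasDerivAt_exp (lam * s)).comp s
      (by simpa using (hasDerivAt_id s).const_mul lam))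
    convert h1 using 1
    ring
  have hanti : AntitoneOn W (Icc 0 t₁) := by
    apply antitoneOn_of_deriv_nonpos (convex_Icc 0 t₁)
    · exact fun s hs => ((hW' s hs).continuousAt).continuousWithinAt
    · intro s hs
      exact ((hW' s (interior_subset hs)).differentiableAt).differentiableWithinAt
    · intro s hs
      rw [interior_Icc] at hs
      rw [(hW' s (Ioo_subset_Icc_self hs)).deriv]
      have := hle s (Ioo_subset_Icc_self hs)
      nlinarith [Real.exp_pos (lam * s)]
  have h0 : (0:ℝ) ∈ Icc (0:ℝ) t₁ := ⟨le_refl _, ht.1.trans ht.2⟩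
  have hWt : W t ≤ V 0 := by simpa [hW] using hanti h0 ht ht.1
  have hVt : V t = W t * Real.exp (-lam * t) := by
    rw [hW]; simp [mul_assoc, ← Real.exp_add]
  rw [hVt]
  exact mul_le_mul_of_nonneg_right hWt (Real.exp_nonneg _)

lemma hasDerivAt_quadForm
    (M : (Fin n → ℝ) → Matrix (Fin n) (Fin n) ℝ)
    (hMC1 : ∀ i j, ContDiff ℝ 1 (fun x => M x i j))
    (Xp Xq : ℝ → (Fin n → ℝ)) (vp vq : Fin n → ℝ) (t : ℝ)
    (hp : HasDerivAt Xp vp t) (hq : HasDerivAt Xq vq t) :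
    HasDerivAt (fun s => (Xp s - Xq s) ⬝ᵥ (M (Xp s) *ᵥ (Xp s - Xq s)))
      ((vp - vq) ⬝ᵥ (M (Xp t) *ᵥ (Xp t - Xq t))
        + (Xp t - Xq t) ⬝ᵥ ((Matrix.of fun i j => fderiv ℝ (fun y => M y i j) (Xp t) vp) *ᵥ (Xp t - Xq t))
        + (Xp t - Xq t) ⬝ᵥ (M (Xp t) *ᵥ (vp - vq))) t := by
  have hΔ : ∀ i : Fin n, HasDerivAt (fun s => Xp s i - Xq s i) (vp i - vq i) t := by
    intro i
    exact (((ContinuousLinearMap.proj i : (Fin n → ℝ) →L[ℝ] ℝ).hasFDerivAt.comp_hasDerivAt t hp)).sub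
      (((ContinuousLinearMap.proj i : (Fin n → ℝ) →L[ℝ] ℝ).hasFDerivAt.comp_hasDerivAt t hq))
  have hM : ∀ i j : Fin n, HasDerivAt (fun s => M (Xp s) i j)
      (fderiv ℝ (fun y => M y i j) (Xp t) vp) t := by
    intro i j
    exact (((hMC1 i j).differentiable one_ne_zero (Xp t)).hasFDerivAt).comp_hasDerivAt t hp
  have key : HasDerivAt (fun s => ∑ i, ∑ j, (Xp s i - Xq s i) * M (Xp s) i j * (Xp s j - Xq s j))
      (∑ i, ∑ j, ((vp i - vq i) * M (Xp t) i j * (Xp t j - Xq t j)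
        + (Xp t i - Xq t i) * fderiv ℝ (fun y => M y i j) (Xp t) vp * (Xp t j - Xq t j)
        + (Xp t i - Xq t i) * M (Xp t) i j * (vp j - vq j))) t := by
    apply HasDerivAt.fun_sum
    intro i _
    apply HasDerivAt.fun_sum
    intro j _
    have h : HasDerivAt (fun s => (Xp s i - Xq s i) * M (Xp s) i j * (Xp s j - Xq s j)) _ t :=
      ((hΔ i).mul (hM i j)).mul (hΔ j)
    exact h.congr_deriv (by simp only [Pi.mul_apply]; ring)
  convert key using 1
  · funext s
    simp [dotProduct, mulVec, Finset.mul_sum, mul_assoc]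
  · simp [dotProduct, mulVec, Finset.mul_sum, Finset.sum_add_distrib, mul_assoc]

end Helpers
section Core

variable {n : ℕ}

/-- Core pairwise estimate with bootstrap. -/
lemma core_pair
    (f : (Fin n → ℝ) → (Fin n → ℝ)) (hf : ContDiff ℝ 1 f)
    (M : (Fin n → ℝ) → Matrix (Fin n) (Fin n) ℝ)
    (hMC1 : ∀ i j, ContDiff ℝ 1 (fun x => M x i j))
    (hMsym : ∀ x, (M x)ᵀ = M x)
    (a₁ a₂ : ℝ) (ha₁ : 0 < a₁) (ha₁₂ : a₁ ≤ a₂)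
    (hlow : ∀ x, (M x - a₁ • 1).PosSemidef)
    (hup : ∀ x, (a₂ • 1 - M x).PosSemidef)
    (ρ : ℝ) (hρ : 0 < ρ)
    (hcontr : ∀ x,
      (-(ρ • M x) -
        ((Matrix.of fun i j => fderiv ℝ (fun y => M y i j) x (f x)) +
          (jac f x)ᵀ * M x + M x * jac f x)).PosSemidef)
    (X : (Fin n → ℝ) → ℝ → (Fin n → ℝ))
    (hX0 : ∀ x, X x 0 = x)
    (hXode : ∀ x t, 0 ≤ t → HasDerivAt (X x) (f (X x t)) t)
    (T : ℝ) (hT : 0 ≤ T)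
    (η : ℝ) (hη : 0 < η) (hηρ : η < ρ)
    (K : Set (Fin n → ℝ)) (δ ε : ℝ) (hδ0 : 0 < δ) (hδ1 : δ ≤ 1) (hε0 : 0 ≤ ε)
    (hεη : 2 * (a₂ * ((n:ℝ) * ((n:ℝ) * ε))) ≤ η * a₁)
    (hKd : ∀ y ∈ K, ∀ z ∈ K, dist y z ≤ δ → ‖fderiv ℝ f y - fderiv ℝ f z‖ ≤ ε)
    (p q : Fin n → ℝ)
    (hK : ∀ t ∈ Icc (0:ℝ) T, ∀ z, dist z (X p t) ≤ 1 → z ∈ K)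
    (hpq : Real.sqrt (a₂ / a₁) * euclNorm (p - q) < δ) :
    ∀ t ∈ Icc (0:ℝ) T, euclNorm (X p t - X q t) ≤
      Real.sqrt (a₂ / a₁) * euclNorm (p - q) * Real.exp (-(ρ - η) * t / 2) := by
  have ha₂ : 0 < a₂ := lt_of_lt_of_le ha₁ ha₁₂
  set c : ℝ := Real.sqrt (a₂ / a₁) with hc
  have hc1 : 1 ≤ c := by
    rw [hc]
    rw [show (1:ℝ) = Real.sqrt 1 by simp]
    exact Real.sqrt_le_sqrt ((one_le_div ha₁).2 ha₁₂)
  have hc0 : 0 ≤ c := le_trans zero_le_one hc1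
  set Δ : ℝ → (Fin n → ℝ) := fun t => X p t - X q t with hΔdef
  set V : ℝ → ℝ := fun t => Δ t ⬝ᵥ (M (X p t) *ᵥ Δ t) with hVdef
  set V' : ℝ → ℝ := fun t =>
    (f (X p t) - f (X q t)) ⬝ᵥ (M (X p t) *ᵥ Δ t)
    + Δ t ⬝ᵥ ((Matrix.of fun i j => fderiv ℝ (fun y => M y i j) (X p t) (f (X p t))) *ᵥ Δ t)
    + Δ t ⬝ᵥ (M (X p t) *ᵥ (f (X p t) - f (X q t))) with hV'def
  have hVd : ∀ t ∈ Icc (0:ℝ) T, HasDerivAt V (V' t) t := by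
    intro t ht
    exact hasDerivAt_quadForm M hMC1 (X p) (X q) (f (X p t)) (f (X q t)) t
      (hXode p t ht.1) (hXode q t ht.1)
  -- quadratic bounds for V
  have hVlow : ∀ t, a₁ * euclNorm (Δ t) ^ 2 ≤ V t := by
    intro t
    have h0 := psd_quad (hlow (X p t)) (Δ t)
    rw [sub_mulVec, smul_mulVec, one_mulVec, dotProduct_sub, dotProduct_smul] at h0
    rw [dotProduct_self_eq] at h0
    simp only [smul_eq_mul] at h0
    linarith
  have hVup : ∀ t, V t ≤ a₂ * euclNorm (Δ t) ^ 2 := by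
    intro t
    have h0 := psd_quad (hup (X p t)) (Δ t)
    rw [sub_mulVec, smul_mulVec, one_mulVec, dotProduct_sub, dotProduct_smul] at h0
    rw [dotProduct_self_eq] at h0
    simp only [smul_eq_mul] at h0
    linarith
  -- entries of M are bounded by a₂
  have hMpsd : ∀ x : Fin n → ℝ, (M x).PosSemidef := by
    intro x
    refine Matrix.PosSemidef.of_dotProduct_mulVec_nonneg ?_ ?_
    · rw [Matrix.IsHermitian]
      rw [show (M x)ᴴ = (M x)ᵀ from rfl]
      exact hMsym x
    · intro v
      have h0 := psd_quad (hlow x) v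
      rw [sub_mulVec, smul_mulVec, one_mulVec, dotProduct_sub, dotProduct_smul] at h0
      simp only [smul_eq_mul, RCLike.re_to_real] at h0 ⊢
      have h1 : 0 ≤ v ⬝ᵥ v := by rw [dotProduct_self_eq]; positivity
      have : star v = v := rfl
      rw [this]
      nlinarith
  have hMdiag : ∀ x (i : Fin n), M x i i ≤ a₂ := by
    intro x i
    have h0 := psd_quad (hup x) (Pi.single i 1 : Fin n → ℝ)
    rw [sub_mulVec, smul_mulVec, one_mulVec, dotProduct_sub, dotProduct_smul] at h0
    simp only [smul_eq_mul] at h0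
    have h1 : (Pi.single i 1 : Fin n → ℝ) ⬝ᵥ (Pi.single i 1 : Fin n → ℝ) = 1 := by
      simp [dotProduct, Pi.single_apply]
    have h2 : (Pi.single i 1 : Fin n → ℝ) ⬝ᵥ (M x *ᵥ (Pi.single i 1 : Fin n → ℝ)) = M x i i := by
      simp [Matrix.mulVec_single, dotProduct, Pi.single_apply]
    rw [h1, h2] at h0
    linarith
  have hMentry : ∀ x (i j : Fin n), |M x i j| ≤ a₂ :=
    fun x => entry_abs_le (hMpsd x) (hMdiag x)
  -- the key differential inequality
  have hkey : ∀ t ∈ Icc (0:ℝ) T, ‖Δ t‖ ≤ δ → V' t ≤ -(ρ - η) * V t := by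
    intro t ht hΔδ
    set x := X p t with hx
    set J := jac f x with hJ
    set r : Fin n → ℝ := (f (X p t) - f (X q t)) - J *ᵥ Δ t with hr
    -- chord estimate
    have hrbound : ‖r‖ ≤ ε * ‖Δ t‖ := by
      have hseg : ∀ y ∈ segment ℝ x (X q t), ‖fderiv ℝ f y - fderiv ℝ f x‖ ≤ ε := by
        intro y hy
        have hyball : dist y x ≤ ‖Δ t‖ := by
          have h1 : segment ℝ x (X q t) ⊆ Metric.closedBall x (dist x (X q t)) := by
            apply (convex_closedBall x (dist x (X q t))).segment_subset
            · exact Metric.mem_closedBall_self dist_nonneg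
            · simp [Metric.mem_closedBall, dist_comm]
          have h2 := h1 hy
          rw [Metric.mem_closedBall] at h2
          have h3 : dist x (X q t) = ‖Δ t‖ := by
            rw [dist_eq_norm]
          exact h2.trans_eq h3
        have hyK : y ∈ K := hK t ht y (le_trans hyball (le_trans hΔδ hδ1))
        have hxK : x ∈ K := hK t ht x (by rw [hx, dist_self]; exact zero_le_one)
        exact hKd y hyK x hxK (le_trans hyball hΔδ)
      have h := chord_estimate f hf x (X q t) hseg
      have heq : f (X q t) - f x - fderiv ℝ f x (X q t - x) = -r := by
        rw [hr, jac_mulVec]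
        rw [show X q t - x = -(Δ t) by rw [hx, hΔdef]; exact (neg_sub _ _).symm]
        rw [map_neg]
        abel
      rw [heq, norm_neg] at h
      have : ‖X q t - x‖ = ‖Δ t‖ := by
        rw [show X q t - x = -(Δ t) by rw [hx, hΔdef]; exact (neg_sub _ _).symm, norm_neg]
      rwa [this] at h
    -- decompose V'
    have hdecomp : V' t =
        (Δ t ⬝ᵥ ((Matrix.of fun i j => fderiv ℝ (fun y => M y i j) x (f x)) *ᵥ Δ t)
          + (J *ᵥ Δ t) ⬝ᵥ (M x *ᵥ Δ t) + Δ t ⬝ᵥ (M x *ᵥ (J *ᵥ Δ t)))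
        + (r ⬝ᵥ (M x *ᵥ Δ t) + Δ t ⬝ᵥ (M x *ᵥ r)) := by
      rw [hV'def]
      have hfd : f (X p t) - f (X q t) = J *ᵥ Δ t + r := by rw [hr]; abel
      simp only []
      rw [hfd, add_dotProduct, mulVec_add, dotProduct_add]
      ring
    have hcontrq := contr_quad (M x) (Matrix.of fun i j => fderiv ℝ (fun y => M y i j) x (f x))
      J ρ (Δ t) (hcontr x)
    -- error bounds
    have habs : ∀ i, |r i| ≤ ε * euclNorm (Δ t) := by
      intro i
      calc |r i| ≤ ‖r‖ := by
            rw [show |r i| = ‖r i‖ from rfl]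
            exact norm_le_pi_norm r i
        _ ≤ ε * ‖Δ t‖ := hrbound
        _ ≤ ε * euclNorm (Δ t) := mul_le_mul_of_nonneg_left (pinorm_le_euclNorm _) hε0
    have hsum_r : (∑ i, |r i|) ≤ (n:ℝ) * (ε * euclNorm (Δ t)) := by
      calc (∑ i, |r i|) ≤ ∑ _i : Fin n, ε * euclNorm (Δ t) :=
            Finset.sum_le_sum (fun i _ => habs i)
        _ = (n:ℝ) * (ε * euclNorm (Δ t)) := by simp [mul_comm]
    have hsum_Δ : (∑ i, |Δ t i|) ≤ (n:ℝ) * euclNorm (Δ t) := by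
      calc (∑ i, |Δ t i|) ≤ ∑ _i : Fin n, euclNorm (Δ t) :=
            Finset.sum_le_sum (fun i _ => abs_le_euclNorm _ i)
        _ = (n:ℝ) * euclNorm (Δ t) := by simp
    have hsums_nonneg1 : (0:ℝ) ≤ ∑ i, |r i| := Finset.sum_nonneg (fun i _ => abs_nonneg _)
    have hsums_nonneg2 : (0:ℝ) ≤ ∑ i, |Δ t i| := Finset.sum_nonneg (fun i _ => abs_nonneg _)
    have herr1 : |r ⬝ᵥ (M x *ᵥ Δ t)| ≤ a₂ * ((n:ℝ) * ((n:ℝ) * ε)) * euclNorm (Δ t) ^ 2 := by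
      calc |r ⬝ᵥ (M x *ᵥ Δ t)| ≤ a₂ * ((∑ i, |r i|) * (∑ j, |Δ t j|)) :=
            dot_mulVec_abs_le (le_of_lt ha₂) (hMentry x) _ _
        _ ≤ a₂ * (((n:ℝ) * (ε * euclNorm (Δ t))) * ((n:ℝ) * euclNorm (Δ t))) := by
            apply mul_le_mul_of_nonneg_left _ (le_of_lt ha₂)
            apply mul_le_mul hsum_r hsum_Δ hsums_nonneg2
            have := euclNorm_nonneg (Δ t); positivity
        _ = a₂ * ((n:ℝ) * ((n:ℝ) * ε)) * euclNorm (Δ t) ^ 2 := by ring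
    have herr2 : |Δ t ⬝ᵥ (M x *ᵥ r)| ≤ a₂ * ((n:ℝ) * ((n:ℝ) * ε)) * euclNorm (Δ t) ^ 2 := by
      calc |Δ t ⬝ᵥ (M x *ᵥ r)| ≤ a₂ * ((∑ i, |Δ t i|) * (∑ j, |r j|)) :=
            dot_mulVec_abs_le (le_of_lt ha₂) (hMentry x) _ _
        _ ≤ a₂ * (((n:ℝ) * euclNorm (Δ t)) * ((n:ℝ) * (ε * euclNorm (Δ t)))) := by
            apply mul_le_mul_of_nonneg_left _ (le_of_lt ha₂)
            apply mul_le_mul hsum_Δ hsum_r hsums_nonneg1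
            have := euclNorm_nonneg (Δ t); positivity
        _ = a₂ * ((n:ℝ) * ((n:ℝ) * ε)) * euclNorm (Δ t) ^ 2 := by ring
    -- combine
    have hVx : V t = Δ t ⬝ᵥ (M x *ᵥ Δ t) := rfl
    have hetaV : 2 * (a₂ * ((n:ℝ) * ((n:ℝ) * ε))) * euclNorm (Δ t) ^ 2
        ≤ η * (Δ t ⬝ᵥ (M x *ᵥ Δ t)) := by
      have h1 : η * (a₁ * euclNorm (Δ t) ^ 2) ≤ η * V t :=
        mul_le_mul_of_nonneg_left (hVlow t) (le_of_lt hη)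
      rw [hVx] at h1
      have h2 := mul_le_mul_of_nonneg_right hεη (sq_nonneg (euclNorm (Δ t)))
      linarith
    rw [hdecomp]
    have e1 := abs_le.1 herr1
    have e2 := abs_le.1 herr2
    rw [hVx]
    linarith [hcontrq, e1.2, e2.2, hetaV]
  -- bootstrap
  have hΔcont : ∀ t ∈ Icc (0:ℝ) T, ContinuousAt Δ t := by
    intro t ht
    exact ((hXode p t ht.1).continuousAt).sub ((hXode q t ht.1).continuousAt)
  have hΔ0 : Δ 0 = p - q := by rw [hΔdef]; simp [hX0]
  -- the closed bound set
  set S : Set ℝ := {t | t ∈ Icc (0:ℝ) T ∧ ∀ τ ∈ Icc (0:ℝ) t, ‖Δ τ‖ ≤ δ} with hS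
  have h0S : (0:ℝ) ∈ S := by
    constructor
    · exact ⟨le_refl _, hT⟩
    · intro τ hτ
      have : τ = 0 := le_antisymm hτ.2 hτ.1
      rw [this, hΔ0]
      calc ‖p - q‖ ≤ euclNorm (p - q) := pinorm_le_euclNorm _
        _ ≤ c * euclNorm (p - q) := le_mul_of_one_le_left (euclNorm_nonneg _) hc1
        _ ≤ δ := le_of_lt hpq
  have hSne : S.Nonempty := ⟨0, h0S⟩
  have hSbdd : BddAbove S := ⟨T, fun t htS => htS.1.2⟩
  set t₁ := sSup S with ht₁
  have ht₁0 : 0 ≤ t₁ := le_csSup hSbdd h0S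
  have ht₁T : t₁ ≤ T := csSup_le hSne (fun t htS => htS.1.2)
  have ht₁Icc : t₁ ∈ Icc (0:ℝ) T := ⟨ht₁0, ht₁T⟩
  have hS_lt : ∀ τ, 0 ≤ τ → τ < t₁ → ‖Δ τ‖ ≤ δ := by
    intro τ hτ0 hτlt
    obtain ⟨s, hsS, hτs⟩ := exists_lt_of_lt_csSup hSne hτlt
    exact hsS.2 τ ⟨hτ0, le_of_lt hτs⟩
  have ht₁S : t₁ ∈ S := by
    refine ⟨ht₁Icc, ?_⟩
    intro τ hτ
    rcases lt_or_eq_of_le hτ.2 with h | h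
    · exact hS_lt τ hτ.1 h
    · rw [h]
      rcases eq_or_lt_of_le ht₁0 with h0 | h0
      · rw [← h0, hΔ0]
        calc ‖p - q‖ ≤ euclNorm (p - q) := pinorm_le_euclNorm _
          _ ≤ c * euclNorm (p - q) := le_mul_of_one_le_left (euclNorm_nonneg _) hc1
          _ ≤ δ := le_of_lt hpq
      · -- limit from the left
        have hcont : ContinuousAt (fun s => ‖Δ s‖) t₁ :=
          (hΔcont t₁ ht₁Icc).norm
        refine le_of_tendsto ((hcont.continuousWithinAt (s := Set.Iio t₁)).tendsto) ?_
        filter_upwards [Ioo_mem_nhdsLT_of_mem (Set.mem_Ioc.2 ⟨h0, le_refl t₁⟩)] with s hs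
        exact hS_lt s (le_of_lt hs.1) hs.2
  -- Gronwall on [0, t₁]
  have hgron : ∀ t ∈ Icc (0:ℝ) t₁, V t ≤ V 0 * Real.exp (-(ρ - η) * t) := by
    apply gronwall_exp_decay
    · intro t ht
      exact hVd t ⟨ht.1, le_trans ht.2 ht₁T⟩
    · intro t ht
      exact hkey t ⟨ht.1, le_trans ht.2 ht₁T⟩ (ht₁S.2 t ht)
  -- translate to euclNorm bound
  have hV0 : V 0 ≤ a₂ * euclNorm (p - q) ^ 2 := by
    have := hVup 0
    rwa [hΔ0] at this
  have hmain : ∀ t ∈ Icc (0:ℝ) t₁, euclNorm (Δ t) ≤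
      c * euclNorm (p - q) * Real.exp (-(ρ - η) * t / 2) := by
    intro t ht
    have h1 : a₁ * euclNorm (Δ t) ^ 2 ≤ a₂ * euclNorm (p - q) ^ 2 * Real.exp (-(ρ - η) * t) := by
      calc a₁ * euclNorm (Δ t) ^ 2 ≤ V t := hVlow t
        _ ≤ V 0 * Real.exp (-(ρ - η) * t) := hgron t ht
        _ ≤ a₂ * euclNorm (p - q) ^ 2 * Real.exp (-(ρ - η) * t) :=
            mul_le_mul_of_nonneg_right hV0 (Real.exp_nonneg _)
    set R := c * euclNorm (p - q) * Real.exp (-(ρ - η) * t / 2) with hR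
    have hR0 : 0 ≤ R := mul_nonneg (mul_nonneg hc0 (euclNorm_nonneg _)) (Real.exp_nonneg _)
    have hexp2 : Real.exp (-(ρ - η) * t / 2) ^ 2 = Real.exp (-(ρ - η) * t) := by
      rw [sq, ← Real.exp_add]; ring_nf
    have hc2 : c ^ 2 = a₂ / a₁ := Real.sq_sqrt (by positivity)
    have hR2 : R ^ 2 = a₂ / a₁ * euclNorm (p - q) ^ 2 * Real.exp (-(ρ - η) * t) := by
      rw [hR]
      rw [mul_pow, mul_pow, hexp2, hc2]
    have hsq : euclNorm (Δ t) ^ 2 ≤ R ^ 2 := by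
      rw [hR2]
      rw [div_mul_eq_mul_div, div_mul_eq_mul_div, le_div_iff₀ ha₁]
      nlinarith
    nlinarith [euclNorm_nonneg (Δ t), hR0]
  -- t₁ must equal T
  have ht₁eq : t₁ = T := by
    by_contra hne
    have ht₁lt : t₁ < T := lt_of_le_of_ne ht₁T hne
    have hstrict : ‖Δ t₁‖ < δ := by
      have h1 := hmain t₁ ⟨ht₁0, le_refl _⟩
      have h2 : Real.exp (-(ρ - η) * t₁ / 2) ≤ 1 := by
        rw [Real.exp_le_one_iff]
        have hpos : 0 < ρ - η := by linarith
        have := mul_nonneg (le_of_lt hpos) ht₁0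
        linarith
      calc ‖Δ t₁‖ ≤ euclNorm (Δ t₁) := pinorm_le_euclNorm _
        _ ≤ c * euclNorm (p - q) * Real.exp (-(ρ - η) * t₁ / 2) := h1
        _ ≤ c * euclNorm (p - q) * 1 := by
            apply mul_le_mul_of_nonneg_left h2
            exact mul_nonneg hc0 (euclNorm_nonneg _)
        _ = c * euclNorm (p - q) := mul_one _
        _ < δ := hpq
    have hcont : ContinuousAt (fun s => ‖Δ s‖) t₁ := (hΔcont t₁ ht₁Icc).norm
    have hev : ∀ᶠ s in 𝓝 t₁, ‖Δ s‖ < δ := hcont (isOpen_Iio.mem_nhds hstrict)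
    obtain ⟨ε', hε', hball⟩ := Metric.eventually_nhds_iff.1 hev
    set t₂ := min T (t₁ + ε' / 2) with ht₂
    have ht₂gt : t₁ < t₂ := lt_min ht₁lt (by linarith)
    have ht₂S : t₂ ∈ S := by
      constructor
      · exact ⟨le_trans ht₁0 (le_of_lt ht₂gt), min_le_left _ _⟩
      · intro τ hτ
        rcases le_or_gt τ t₁ with h | h
        · exact ht₁S.2 τ ⟨hτ.1, h⟩
        · apply le_of_lt
          apply hball
          rw [Real.dist_eq, abs_lt]
          constructor
          · linarith [hε']
          · have h1 : τ ≤ t₂ := hτ.2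
            have h2 : t₂ ≤ t₁ + ε' / 2 := min_le_right _ _
            linarith
    have := le_csSup hSbdd ht₂S
    linarith
  intro t ht
  exact hmain t (by rw [ht₁eq]; exact ht)

end Core
/-- a uniformly bounded contraction metric with rate `ρ` implies
exponential convergence of any two trajectories with overshoot `√(a₂/a₁)`. -/
theorem contraction_metric_implies_incremental_exponential_stability
    {n : ℕ}
    (f : (Fin n → ℝ) → (Fin n → ℝ)) (hf : ContDiff ℝ 1 f)
    (M : (Fin n → ℝ) → Matrix (Fin n) (Fin n) ℝ)
    (hMC1 : ∀ i j, ContDiff ℝ 1 (fun x => M x i j))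
    (hMsym : ∀ x, (M x)ᵀ = M x)
    (a₁ a₂ : ℝ) (ha₁ : 0 < a₁) (ha₁₂ : a₁ ≤ a₂)
    (hlow : ∀ x, (M x - a₁ • 1).PosSemidef)
    (hup : ∀ x, (a₂ • 1 - M x).PosSemidef)
    (ρ : ℝ) (hρ : 0 < ρ)
    (hcontr : ∀ x,
      (-(ρ • M x) -
        ((Matrix.of fun i j => fderiv ℝ (fun y => M y i j) x (f x)) +
          (jac f x)ᵀ * M x + M x * jac f x)).PosSemidef)
    (X : (Fin n → ℝ) → ℝ → (Fin n → ℝ))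
    (hX0 : ∀ x, X x 0 = x)
    (hXode : ∀ x t, 0 ≤ t → HasDerivAt (X x) (f (X x t)) t) :
    ∀ xa xb : Fin n → ℝ, ∀ t ≥ (0:ℝ),
      euclNorm (X xa t - X xb t) ≤
        Real.sqrt (a₂ / a₁) * euclNorm (xa - xb) * Real.exp (-ρ * t / 2) := by
  intro xa xb t ht
  have ha₂ : 0 < a₂ := lt_of_lt_of_le ha₁ ha₁₂
  set c : ℝ := Real.sqrt (a₂ / a₁) with hc
  have hc1 : 1 ≤ c := by
    rw [hc, show (1:ℝ) = Real.sqrt 1 by simp]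
    exact Real.sqrt_le_sqrt ((one_le_div ha₁).2 ha₁₂)
  have hc0 : 0 ≤ c := le_trans zero_le_one hc1
  set d₀ : ℝ := euclNorm (xa - xb) with hd₀
  have hd₀0 : 0 ≤ d₀ := euclNorm_nonneg _
  -- main estimate for each fixed η ∈ (0, ρ)
  have main : ∀ η : ℝ, 0 < η → η < ρ →
      euclNorm (X xa t - X xb t) ≤ c * d₀ * Real.exp (-(ρ - η) * t / 2) := by
    intro η hη hηρ
    -- compact tube around the reference trajectory
    have hcurvecont : ContinuousOn (X xa) (Icc 0 t) :=
      fun s hs => ((hXode xa s hs.1).continuousAt).continuousWithinAt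
    have hcurve : IsCompact (X xa '' Icc 0 t) := (isCompact_Icc).image_of_continuousOn hcurvecont
    set R : ℝ := c * d₀ with hR
    have hR0 : 0 ≤ R := mul_nonneg hc0 hd₀0
    set K : Set (Fin n → ℝ) := Metric.cthickening (R + 1) (X xa '' Icc 0 t) with hK
    have hKcomp : IsCompact K := hcurve.cthickening
    -- choose ε
    set D : ℝ := 2 * (a₂ * ((n:ℝ) * ((n:ℝ) * 1))) with hD
    have hD0 : 0 ≤ D := by positivity
    set ε : ℝ := η * a₁ / (D + 1) with hε
    have hεpos : 0 < ε := by positivity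
    have hεη : 2 * (a₂ * ((n:ℝ) * ((n:ℝ) * ε))) ≤ η * a₁ := by
      have h1 : 2 * (a₂ * ((n:ℝ) * ((n:ℝ) * ε))) = D * ε := by rw [hD]; ring
      rw [h1, hε]
      rw [div_eq_mul_inv, ← mul_assoc]
      rw [show D * (η * a₁) * (D + 1)⁻¹ = (η * a₁) * (D * (D + 1)⁻¹) by ring]
      have h2 : D * (D + 1)⁻¹ ≤ 1 := by
        rw [← div_eq_mul_inv, div_le_one (by linarith)]
        linarith
      have h3 : 0 ≤ η * a₁ := le_of_lt (mul_pos hη ha₁)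
      have h4 := mul_le_mul_of_nonneg_left h2 h3
      linarith
    -- uniform continuity of the Jacobian on K
    have hgu : UniformContinuousOn (fderiv ℝ f) K :=
      hKcomp.uniformContinuousOn_of_continuous (hf.continuous_fderiv one_ne_zero).continuousOn
    obtain ⟨δ₀, hδ₀pos, hδ₀⟩ := Metric.uniformContinuousOn_iff.1 hgu ε hεpos
    set δ : ℝ := min 1 (δ₀ / 2) with hδ
    have hδ0 : 0 < δ := lt_min one_pos (by linarith)
    have hδ1 : δ ≤ 1 := min_le_left _ _
    have hKd : ∀ y ∈ K, ∀ z ∈ K, dist y z ≤ δ → ‖fderiv ℝ f y - fderiv ℝ f z‖ ≤ ε := by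
      intro y hy z hz hdist
      have h1 : dist y z < δ₀ := lt_of_le_of_lt (hdist.trans (min_le_right _ _)) (by linarith)
      have h2 := hδ₀ y hy z hz h1
      rw [← dist_eq_norm]
      exact le_of_lt h2
    -- choose the number of subdivisions
    obtain ⟨N₀, hN₀⟩ := exists_nat_gt (c * d₀ / δ)
    set N : ℕ := N₀ + 1 with hN
    have hNpos : 0 < (N:ℝ) := by positivity
    have hNd : c * (d₀ / N) < δ := by
      have h1 : c * d₀ / δ < N := lt_of_lt_of_le hN₀ (by exact_mod_cast Nat.le_succ N₀)
      rw [div_lt_iff₀ hδ0] at h1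
      rw [mul_div_assoc'] at *
      rw [div_lt_iff₀ hNpos]
      linarith [h1]
    -- subdivision points
    set y : ℕ → (Fin n → ℝ) := fun k => xa + ((k:ℝ) / (N:ℝ)) • (xb - xa) with hy
    have hy0 : y 0 = xa := by simp [hy]
    have hyN : y N = xb := by
      rw [hy]
      simp only []
      rw [div_self (ne_of_gt hNpos), one_smul]
      abel
    have hyd : ∀ k : ℕ, euclNorm (y k - y (k + 1)) = d₀ / N := by
      intro k
      have h1 : y k - y (k + 1) = (-(1 / (N:ℝ))) • (xb - xa) := by
        rw [hy]
        simp only []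
        rw [show xa + ((k:ℝ)/(N:ℝ)) • (xb - xa) - (xa + (((k+1:ℕ):ℝ)/(N:ℝ)) • (xb - xa))
            = (((k:ℝ)/(N:ℝ)) - (((k+1:ℕ):ℝ)/(N:ℝ))) • (xb - xa) by rw [sub_smul]; abel]
        congr 1
        push_cast
        ring
      rw [h1, euclNorm_smul]
      rw [abs_neg, abs_of_nonneg (by positivity)]
      rw [euclNorm_sub_rev xb xa, ← hd₀]
      ring
    -- the inductive trajectory bound
    have hind : ∀ k : ℕ, k ≤ N → ∀ s ∈ Icc (0:ℝ) t,
        euclNorm (X (y k) s - X xa s) ≤ (k:ℝ) * (c * (d₀ / N) * Real.exp (-(ρ - η) * s / 2)) := by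
      intro k
      induction k with
      | zero =>
          intro _ s hs
          rw [hy0]
          simp [euclNorm, Real.sqrt_eq_zero', Finset.sum_nonneg]
      | succ k ih =>
          intro hk1 s hs
          have hk : k ≤ N := le_trans (Nat.le_succ k) hk1
          have hkN : (k:ℝ) ≤ (N:ℝ) := by exact_mod_cast hk
          have ihs := ih hk
          -- apply the core pairwise lemma to (y k, y (k+1))
          have hKarg : ∀ s' ∈ Icc (0:ℝ) t, ∀ z, dist z (X (y k) s') ≤ 1 → z ∈ K := by
            intro s' hs' z hz
            have hexp1 : Real.exp (-(ρ - η) * s' / 2) ≤ 1 := by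
              rw [Real.exp_le_one_iff]
              have hpos : 0 < ρ - η := by linarith
              have := mul_nonneg (le_of_lt hpos) hs'.1
              linarith
            have hdist1 : dist (X (y k) s') (X xa s') ≤ R := by
              rw [dist_eq_norm]
              calc ‖X (y k) s' - X xa s'‖ ≤ euclNorm (X (y k) s' - X xa s') :=
                    pinorm_le_euclNorm _
                _ ≤ (k:ℝ) * (c * (d₀ / N) * Real.exp (-(ρ - η) * s' / 2)) := ihs s' hs'
                _ ≤ (k:ℝ) * (c * (d₀ / N)) := by
                    apply mul_le_mul_of_nonneg_left _ (Nat.cast_nonneg k)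
                    have h0 : 0 ≤ c * (d₀ / N) := by positivity
                    nlinarith
                _ ≤ (N:ℝ) * (c * (d₀ / N)) := by
                    apply mul_le_mul_of_nonneg_right hkN (by positivity)
                _ = R := by
                    rw [hR]
                    field_simp
            have hzdist : dist z (X xa s') ≤ R + 1 := by
              calc dist z (X xa s') ≤ dist z (X (y k) s') + dist (X (y k) s') (X xa s') :=
                    dist_triangle _ _ _
                _ ≤ 1 + R := add_le_add hz hdist1
                _ = R + 1 := by ring
            exact Metric.mem_cthickening_of_dist_le z (X xa s') (R + 1) _
              ⟨s', hs', rfl⟩ hzdist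
          have hpqarg : Real.sqrt (a₂ / a₁) * euclNorm (y k - y (k + 1)) < δ := by
            rw [hyd k, ← hc, ← mul_div_assoc]
            rw [mul_div_assoc]
            exact hNd
          have hcore := core_pair f hf M hMC1 hMsym a₁ a₂ ha₁ ha₁₂ hlow hup ρ hρ hcontr
            X hX0 hXode t ht η hη hηρ K δ ε hδ0 hδ1 (le_of_lt hεpos) hεη hKd
            (y k) (y (k + 1)) hKarg hpqarg
          have hpair := hcore s hs
          rw [hyd k] at hpair
          -- triangle inequality
          have htri : X (y (k+1)) s - X xa s
              = (X (y (k+1)) s - X (y k) s) + (X (y k) s - X xa s) := by abel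
          calc euclNorm (X (y (k+1)) s - X xa s)
              ≤ euclNorm (X (y (k+1)) s - X (y k) s) + euclNorm (X (y k) s - X xa s) := by
                rw [htri]; exact euclNorm_add_le _ _
            _ ≤ Real.sqrt (a₂/a₁) * (d₀ / N) * Real.exp (-(ρ - η) * s / 2)
                + (k:ℝ) * (c * (d₀ / N) * Real.exp (-(ρ - η) * s / 2)) := by
                apply add_le_add _ (ihs s hs)
                rw [euclNorm_sub_rev]
                exact hpair
            _ = ((k:ℕ) + 1 : ℕ) * (c * (d₀ / N) * Real.exp (-(ρ - η) * s / 2)) := by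
                rw [← hc]
                push_cast
                ring
    -- conclude at k = N, s = t
    have hfinal := hind N (le_refl N) t ⟨ht, le_refl t⟩
    rw [hyN] at hfinal
    rw [euclNorm_sub_rev (X xa t) (X xb t)]
    calc euclNorm (X xb t - X xa t) ≤ (N:ℝ) * (c * (d₀ / N) * Real.exp (-(ρ - η) * t / 2)) :=
          hfinal
      _ = c * d₀ * Real.exp (-(ρ - η) * t / 2) := by
          field_simp
  -- take the limit η → 0⁺
  have hcont : Continuous (fun η : ℝ => c * d₀ * Real.exp (-(ρ - η) * t / 2)) := by
    apply continuous_const.mul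
    exact Real.continuous_exp.comp (by continuity)
  have hlim : Filter.Tendsto (fun η : ℝ => c * d₀ * Real.exp (-(ρ - η) * t / 2))
      (nhdsWithin 0 (Set.Ioi 0)) (nhds (c * d₀ * Real.exp (-ρ * t / 2))) := by
    have h0 : c * d₀ * Real.exp (-ρ * t / 2) = c * d₀ * Real.exp (-(ρ - 0) * t / 2) := by
      ring_nf
    rw [h0]
    exact (hcont.tendsto 0).mono_left nhdsWithin_le_nhds
  refine ge_of_tendsto hlim ?_
  filter_upwards [Ioo_mem_nhdsGT_of_mem (Set.mem_Ico.2 ⟨le_refl (0:ℝ), hρ⟩)] with η hηm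
  exact main η hηm.1 hηm.2
end

section
/- Let ẋ = f(x) be forward complete and globally asymptotically stable to 0, and let φ⁰ : ℝⁿ → ℝⁿ be C¹ satisfying Dφ⁰(x)f(x) = Aφ⁰(x) with A Hurwitz, such that φ⁰ is injective with invertible Jacobian on a ball B_ε(0). Suppose for every x there is t_x ≥ 0 with X(x,t) ∈ B_ε(0) for all t ≥ t_x. Define φ(x) := e^{−A t_x} φ⁰(X(x,t_x)). Then φ is well-defined (independent of the choice of admissible t_x), satisfies Dφ(x)f(x) = Aφ(x) wherever differentiable, agrees with φ⁰ on B_ε(0), and has invertible Jacobian at every x. -/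
open Matrix MeasureTheory

section KoopmanAux

open NormedSpace

/-- The algebra homomorphism sending a matrix to the induced continuous linear map. -/
noncomputable def toCLM (n : ℕ) :
    Matrix (Fin n) (Fin n) ℝ →ₐ[ℝ] ((Fin n → ℝ) →L[ℝ] (Fin n → ℝ)) :=
  AlgHom.ofLinearMap
    { toFun := fun M => LinearMap.toContinuousLinearMap (Matrix.mulVecLin M)
      map_add' := fun M N => by ext v; simp
      map_smul' := fun r M => by ext v; simp [Matrix.smul_mulVec] }
    (by ext v; simp)
    (fun M N => by ext v; simp)

lemma toCLM_apply {n : ℕ} (M : Matrix (Fin n) (Fin n) ℝ) (v : Fin n → ℝ) :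
    toCLM n M v = M.mulVec v := rfl

lemma toCLM_continuous (n : ℕ) : Continuous (toCLM n) :=
  LinearMap.continuous_of_finiteDimensional (toCLM n).toLinearMap

lemma mulVec_exp {n : ℕ} (M : Matrix (Fin n) (Fin n) ℝ) (v : Fin n → ℝ) :
    (exp M).mulVec v = exp (toCLM n M) v := by
  letI : SeminormedRing (Matrix (Fin n) (Fin n) ℝ) := Matrix.linftyOpSemiNormedRing
  letI : NormedRing (Matrix (Fin n) (Fin n) ℝ) := Matrix.linftyOpNormedRing
  letI : NormedAlgebra ℝ (Matrix (Fin n) (Fin n) ℝ) := Matrix.linftyOpNormedAlgebra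
  rw [← toCLM_apply]
  exact congrArg (fun T => T v) (map_exp_of_mem_ball (𝕂 := ℝ) (toCLM n) (toCLM_continuous n) M
    ((expSeries_radius_eq_top ℝ (Matrix (Fin n) (Fin n) ℝ)).symm ▸ edist_lt_top _ _))

lemma pi_single_sum {n : ℕ} (v : Fin n → ℝ) :
    ∑ j, v j • (Pi.single j 1 : Fin n → ℝ) = v := by
  funext k
  simp [Finset.sum_apply, Pi.single_apply]

lemma jac_mulVec_s15 {n N : ℕ} (ψ : (Fin n → ℝ) → (Fin N → ℝ)) (z : Fin n → ℝ) (v : Fin n → ℝ) :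
    (jac ψ z).mulVec v = fderiv ℝ ψ z v := by
  have h : fderiv ℝ ψ z v = ∑ j, v j • fderiv ℝ ψ z (Pi.single j 1 : Fin n → ℝ) := by
    conv_lhs => rw [← pi_single_sum v]
    rw [map_sum]
    simp
  rw [h]
  funext i
  simp [jac, Matrix.mulVec, dotProduct, Finset.sum_apply, mul_comm]

lemma inj_of_isUnit_det {n : ℕ} {ψ : (Fin n → ℝ) → (Fin n → ℝ)} {z : Fin n → ℝ}
    (h : IsUnit (jac ψ z).det) : Function.Injective (fderiv ℝ ψ z) := by
  have h2 : Function.Injective ((jac ψ z).mulVec) :=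
    Matrix.mulVec_injective_iff_isUnit.mpr ((Matrix.isUnit_iff_isUnit_det _).mpr h)
  intro a b hab
  exact h2 (by rw [jac_mulVec_s15, jac_mulVec_s15, hab])

lemma isUnit_det_of_inj {n : ℕ} {ψ : (Fin n → ℝ) → (Fin n → ℝ)} {z : Fin n → ℝ}
    (h : Function.Injective (fderiv ℝ ψ z)) : IsUnit (jac ψ z).det := by
  have h2 : Function.Injective ((jac ψ z).mulVec) := by
    intro a b hab
    exact h (by rw [← jac_mulVec_s15, ← jac_mulVec_s15, hab])
  exact (Matrix.isUnit_iff_isUnit_det _).mp (Matrix.mulVec_injective_iff_isUnit.mp h2)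

lemma antilip_of_inj {n : ℕ} (T : (Fin n → ℝ) →L[ℝ] (Fin n → ℝ))
    (h : Function.Injective T) : ∃ c > 0, ∀ z, ‖z‖ ≤ c * ‖T z‖ := by
  have hb : Function.Bijective (T : (Fin n → ℝ) →ₗ[ℝ] (Fin n → ℝ)) :=
    ⟨h, LinearMap.injective_iff_surjective.mp h⟩
  let e := LinearEquiv.ofBijective (T : (Fin n → ℝ) →ₗ[ℝ] (Fin n → ℝ)) hb
  let S := LinearMap.toContinuousLinearMap (e.symm : (Fin n → ℝ) →ₗ[ℝ] (Fin n → ℝ))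
  refine ⟨‖S‖ + 1, by positivity, fun z => ?_⟩
  have hz : S (T z) = z := e.symm_apply_apply z
  calc ‖z‖ = ‖S (T z)‖ := by rw [hz]
    _ ≤ ‖S‖ * ‖T z‖ := S.le_opNorm _
    _ ≤ (‖S‖ + 1) * ‖T z‖ := by nlinarith [norm_nonneg (T z), norm_nonneg S]

end KoopmanAux

set_option maxHeartbeats 1000000 in
open NormedSpace in
/-- redesign of a locally injective Koopman mapping into a
globally immersive one via `φ(x) = e^{-A t_x} φ⁰(X(x,t_x))`. -/
theorem koopman_mapping_redesign
    {n : ℕ}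
    (f : (Fin n → ℝ) → (Fin n → ℝ)) (hf : ContDiff ℝ 1 f)
    (X : (Fin n → ℝ) → ℝ → (Fin n → ℝ))
    (hX0 : ∀ x, X x 0 = x)
    (hXode : ∀ x t, 0 ≤ t → HasDerivAt (X x) (f (X x t)) t)
    (hGAS : ∀ x, Filter.Tendsto (X x) Filter.atTop (nhds 0))
    (A : Matrix (Fin n) (Fin n) ℝ) (hA : Hurwitz A)
    (φ0 : (Fin n → ℝ) → (Fin n → ℝ)) (hφ0 : ContDiff ℝ 1 φ0)
    (hPDE0 : ∀ x, (jac φ0 x).mulVec (f x) = A.mulVec (φ0 x))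
    (ε : ℝ) (hε : 0 < ε)
    (hinj : Set.InjOn φ0 (Metric.ball (0 : Fin n → ℝ) ε))
    (hjac0 : ∀ x ∈ Metric.ball (0 : Fin n → ℝ) ε, IsUnit (jac φ0 x).det)
    (tx : (Fin n → ℝ) → ℝ)
    (htx : ∀ x, 0 ≤ tx x ∧ ∀ t ≥ tx x, X x t ∈ Metric.ball (0 : Fin n → ℝ) ε)
    (φ : (Fin n → ℝ) → (Fin n → ℝ))
    (hφ : ∀ x, φ x = (exp ((-(tx x)) • A)).mulVec (φ0 (X x (tx x)))) :
    (∀ x t₁ t₂, tx x ≤ t₁ → t₁ ≤ t₂ →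
      (exp ((-t₁) • A)).mulVec (φ0 (X x t₁)) =
        (exp ((-t₂) • A)).mulVec (φ0 (X x t₂))) ∧
    (∀ x ∈ Metric.ball (0 : Fin n → ℝ) ε, φ x = φ0 x) ∧
    (∀ x, DifferentiableAt ℝ φ x → (jac φ x).mulVec (f x) = A.mulVec (φ x)) ∧
    (∀ x, IsUnit (jac φ x).det) := by
  have hsm : ∀ (s : ℝ) (M : Matrix (Fin n) (Fin n) ℝ), toCLM n (s • M) = s • toCLM n M := by
    intro s M
    simpa using map_smul (toCLM n).toLinearMap s M
  -- Constancy of t ↦ e^{-tA} φ0(X x t) on [0, ∞)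
  have hconst : ∀ x t, 0 ≤ t → exp (-(t • toCLM n A)) (φ0 (X x t)) = φ0 x := by
    intro x t ht
    set Lc := toCLM n A with hLcdef
    have hg : ∀ u, 0 ≤ u → HasDerivAt (fun s => exp (-(s • Lc)) (φ0 (X x s))) 0 u := by
      intro u hu
      have hM : HasDerivAt (fun s : ℝ => exp (-(s • Lc))) (-(Lc * exp (-(u • Lc)))) u := by
        have h1 := hasDerivAt_exp_smul_const' (𝕂 := ℝ) Lc (-u)
        have h2 : HasDerivAt (fun s : ℝ => -s) (-1) u := (hasDerivAt_id u).neg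
        have h3 := h1.scomp u h2
        simpa [Function.comp_def, neg_smul] using h3
      have hu' : HasDerivAt (fun s => φ0 (X x s)) (fderiv ℝ φ0 (X x u) (f (X x u))) u :=
        (hφ0.differentiable one_ne_zero (X x u)).hasFDerivAt.comp_hasDerivAt u (hXode x u hu)
      have h4 := hM.clm_apply hu'
      have h5 : (-(Lc * exp (-(u • Lc)))) (φ0 (X x u))
          + exp (-(u • Lc)) (fderiv ℝ φ0 (X x u) (f (X x u))) = 0 := by
        have hcomm : Lc * exp (-(u • Lc)) = exp (-(u • Lc)) * Lc := by
          have := (((Commute.refl Lc).smul_right (-u)).exp_right).eq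
          rwa [neg_smul u Lc] at this
        rw [← jac_mulVec_s15, hPDE0, ← toCLM_apply, ← hLcdef, ContinuousLinearMap.neg_apply, hcomm,
          ContinuousLinearMap.mul_apply]
        simp
      rw [h5] at h4
      exact h4
    have hconst' := constant_of_has_deriv_right_zero
      (f := fun s => exp (-(s • Lc)) (φ0 (X x s))) (a := 0) (b := t)
      (fun u hu => ((hg u hu.1).continuousAt).continuousWithinAt)
      (fun u hu => (hg u hu.1).hasDerivWithinAt)
    have h6 := hconst' t ⟨ht, le_rfl⟩
    rw [h6, hX0]
    simp
  -- the Koopman semigroup relation, forward in time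
  have hK : ∀ x (t : ℝ), 0 ≤ t → φ0 (X x t) = exp (t • toCLM n A) (φ0 x) := by
    intro x t ht
    have h1 := hconst x t ht
    have h2 : ∀ w, exp (t • toCLM n A) (exp (-(t • toCLM n A)) w) = w := by
      intro w
      rw [← ContinuousLinearMap.mul_apply,
        ← NormedSpace.exp_add_of_commute_of_mem_ball (𝕂 := ℝ) ((Commute.refl (t • toCLM n A)).neg_right)
          ((expSeries_radius_eq_top ℝ ((Fin n → ℝ) →L[ℝ] (Fin n → ℝ))).symm ▸ edist_lt_top _ _)
          ((expSeries_radius_eq_top ℝ ((Fin n → ℝ) →L[ℝ] (Fin n → ℝ))).symm ▸ edist_lt_top _ _)]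
      simp
    rw [← h1, h2]
  -- φ agrees with φ0 everywhere
  have hφeq : φ = φ0 := by
    funext x
    rw [hφ x, mulVec_exp, hsm, neg_smul (tx x) (toCLM n A), hconst x (tx x) (htx x).1]
  refine ⟨?_, fun x _ => by rw [hφeq], fun x _ => by rw [hφeq]; exact hPDE0 x, ?_⟩
  · -- well-definedness
    intro x t₁ t₂ h1 h2
    have ht₁ : 0 ≤ t₁ := (htx x).1.trans h1
    rw [mulVec_exp, mulVec_exp, hsm, hsm, neg_smul t₁ (toCLM n A), neg_smul t₂ (toCLM n A),
      hconst x t₁ ht₁, hconst x t₂ (ht₁.trans h2)]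
  -- invertibility of the Jacobian everywhere
  intro x
  rw [hφeq]
  obtain ⟨ht0, hstay⟩ := htx x
  set t : ℝ := tx x with htdef
  -- Gronwall two-sided continuity estimates for the flow map at time t
  have hkeyEx : ∃ L : NNReal, ∀ x' : Fin n → ℝ, dist x' x * Real.exp (L * t) < 1/2 →
      (∀ r ∈ Set.Icc (0:ℝ) t, dist (X x' r) (X x r) ≤ dist x' x * Real.exp (L * r)) ∧
      dist x' x ≤ dist (X x' t) (X x t) * Real.exp (L * t) := by
    have hXc : ∀ x' : Fin n → ℝ, ContinuousOn (X x') (Set.Icc 0 t) :=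
      fun x' r hr => ((hXode x' r hr.1).continuousAt).continuousWithinAt
    have hCcomp : IsCompact (X x '' Set.Icc 0 t) := (isCompact_Icc).image_of_continuousOn (hXc x)
    obtain ⟨R, hR⟩ : ∃ R, X x '' Set.Icc 0 t ⊆ Metric.closedBall 0 R :=
      hCcomp.isBounded.subset_closedBall 0
    set Kset := Metric.closedBall (0 : Fin n → ℝ) (R + 1) with hKset
    have hR0 : 0 ≤ R := by
      have := hR ⟨0, ⟨le_rfl, ht0⟩, rfl⟩
      have h0 := Metric.mem_closedBall.mp this
      exact le_trans dist_nonneg h0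
    have hCK : ∀ r ∈ Set.Icc (0:ℝ) t, X x r ∈ Kset := fun r hr =>
      Metric.closedBall_subset_closedBall (by linarith) (hR (Set.mem_image_of_mem _ hr))
    have hfd : Differentiable ℝ f := hf.differentiable one_ne_zero
    obtain ⟨Cb, hCb⟩ : ∃ Cb, ∀ z ∈ Kset, ‖fderiv ℝ f z‖ ≤ Cb :=
      (isCompact_closedBall 0 (R+1)).exists_bound_of_continuousOn
        ((hf.continuous_fderiv one_ne_zero).continuousOn)
    set L : NNReal := ⟨max Cb 0, le_max_right _ _⟩ with hLdef
    have hLip : LipschitzOnWith L f Kset := by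
      refine Convex.lipschitzOnWith_of_nnnorm_fderiv_le (fun z _ => hfd z) ?_
        (convex_closedBall _ _)
      intro z hz
      have h1 : ‖fderiv ℝ f z‖ ≤ (L : ℝ) := le_trans (hCb z hz) (le_max_left _ _)
      exact_mod_cast h1
    have hLipNeg : LipschitzOnWith L (fun z => -f z) Kset := by
      intro a ha b hb
      simpa [edist_neg_neg] using hLip ha hb
    refine ⟨L, fun x' hx' => ?_⟩
    have hd0 : dist (X x' 0) (X x 0) = dist x' x := by rw [hX0, hX0]
    have hXc' : ∀ x'' : Fin n → ℝ, Continuous (fun r : ℝ => X x'' (max r 0)) := by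
      intro x''
      rw [continuous_iff_continuousAt]
      intro r
      have h1 : ContinuousAt (X x'') (max r 0) :=
        (hXode x'' (max r 0) (le_max_right r 0)).continuousAt
      have h2 : ContinuousAt (fun r : ℝ => max r 0) r :=
        (continuous_id.max continuous_const).continuousAt
      exact ContinuousAt.comp (g := X x'') (f := fun r : ℝ => max r 0) (x := r) h1 h2
    have hdd : dist x' x < 1/2 := by
      have h1 : (1:ℝ) ≤ Real.exp (L * t) := Real.one_le_exp (by positivity)
      nlinarith [dist_nonneg (x := x') (y := x)]
    have hB : ∀ r ∈ Set.Icc (0:ℝ) t, dist (X x' r) (X x r) < 1/2 := by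
      by_contra hcon
      push_neg at hcon
      obtain ⟨r, hr, hr2⟩ := hcon
      set D := fun r : ℝ => dist (X x' (max r 0)) (X x (max r 0)) with hD
      have hDc : Continuous D := ((hXc' x').dist (hXc' x))
      set B := Set.Icc 0 t ∩ D ⁻¹' (Set.Ici (1/2)) with hBdef
      have hBc : IsClosed B := (isClosed_Icc).inter (isClosed_Ici.preimage hDc)
      have hBmem : ∀ u ∈ Set.Icc (0:ℝ) t, (D u = dist (X x' u) (X x u)) := by
        intro u hu
        rw [hD]
        simp [max_eq_left hu.1]
      have hBne : B.Nonempty :=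
        ⟨r, hr, by simp only [Set.mem_preimage, Set.mem_Ici, hBmem r hr]; exact hr2⟩
      have hBbdd : BddBelow B := ⟨0, fun u hu => hu.1.1⟩
      set r₀ := sInf B with hr₀
      have hr₀B : r₀ ∈ B := hBc.csInf_mem hBne hBbdd
      obtain ⟨hr₀I, hr₀D⟩ := hr₀B
      have hr₀d : 1/2 ≤ dist (X x' r₀) (X x r₀) := by
        have := hr₀D
        rwa [Set.mem_preimage, Set.mem_Ici, hBmem r₀ hr₀I] at this
      have hlt : ∀ u ∈ Set.Ico (0:ℝ) r₀, dist (X x' u) (X x u) < 1/2 := by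
        intro u hu
        by_contra hcon2
        push_neg at hcon2
        have huB : u ∈ B := ⟨⟨hu.1, le_trans hu.2.le hr₀I.2⟩, by
          rw [Set.mem_preimage, Set.mem_Ici, hBmem u ⟨hu.1, le_trans hu.2.le hr₀I.2⟩]
          exact hcon2⟩
        exact absurd (csInf_le hBbdd huB) (not_le.mpr hu.2)
      have htube : ∀ u ∈ Set.Ico (0:ℝ) r₀, X x' u ∈ Kset := by
        intro u hu
        have huI : u ∈ Set.Icc (0:ℝ) t := ⟨hu.1, le_trans hu.2.le hr₀I.2⟩
        have h1 := (hlt u hu).le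
        have h2 := Metric.mem_closedBall.mp (hR (Set.mem_image_of_mem _ huI))
        rw [hKset, Metric.mem_closedBall]
        calc dist (X x' u) 0 ≤ dist (X x' u) (X x u) + dist (X x u) 0 := dist_triangle _ _ _
          _ ≤ 1/2 + R := by gcongr
          _ ≤ R + 1 := by linarith
      have hGr := dist_le_of_trajectories_ODE_of_mem (v := fun _ z => f z) (s := fun _ => Kset)
        (K := L) (fun _ _ => hLip)
        ((hXc x').mono (Set.Icc_subset_Icc_right hr₀I.2))
        (fun u hu => (hXode x' u hu.1).hasDerivWithinAt)
        htube
        ((hXc x).mono (Set.Icc_subset_Icc_right hr₀I.2))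
        (fun u hu => (hXode x u hu.1).hasDerivWithinAt)
        (fun u hu => hCK u ⟨hu.1, le_trans hu.2.le hr₀I.2⟩)
        (le_of_eq hd0)
      have h3 := hGr r₀ ⟨hr₀I.1, le_rfl⟩
      rw [sub_zero] at h3
      have h4 : Real.exp (L * r₀) ≤ Real.exp (L * t) :=
        Real.exp_le_exp.mpr (mul_le_mul_of_nonneg_left hr₀I.2 L.coe_nonneg)
      have h5 : dist x' x * Real.exp (L * r₀) ≤ dist x' x * Real.exp (L * t) :=
        mul_le_mul_of_nonneg_left h4 dist_nonneg
      linarith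
    have htubeI : ∀ u ∈ Set.Icc (0:ℝ) t, X x' u ∈ Kset := by
      intro u hu
      have h1 := (hB u hu).le
      have h2 := Metric.mem_closedBall.mp (hR (Set.mem_image_of_mem _ hu))
      rw [hKset, Metric.mem_closedBall]
      calc dist (X x' u) 0 ≤ dist (X x' u) (X x u) + dist (X x u) 0 := dist_triangle _ _ _
        _ ≤ 1/2 + R := by gcongr
        _ ≤ R + 1 := by linarith
    constructor
    · have hGr := dist_le_of_trajectories_ODE_of_mem (v := fun _ z => f z) (s := fun _ => Kset)
        (K := L) (fun _ _ => hLip)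
        (hXc x')
        (fun u hu => (hXode x' u hu.1).hasDerivWithinAt)
        (fun u hu => htubeI u ⟨hu.1, hu.2.le⟩)
        (hXc x)
        (fun u hu => (hXode x u hu.1).hasDerivWithinAt)
        (fun u hu => hCK u ⟨hu.1, hu.2.le⟩)
        (le_of_eq hd0)
      intro u hu
      have := hGr u hu
      rwa [sub_zero] at this
    · have hmap : Set.MapsTo (fun r : ℝ => t - r) (Set.Icc 0 t) (Set.Icc 0 t) := by
        intro u hu
        constructor
        · simp only [Set.mem_Icc] at hu ⊢
          linarith [hu.2]
        · simp only [Set.mem_Icc] at hu ⊢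
          linarith [hu.1]
      have hFc : ContinuousOn (fun r : ℝ => X x' (t - r)) (Set.Icc 0 t) :=
        (hXc x').comp ((continuous_const.sub continuous_id).continuousOn) hmap
      have hGc : ContinuousOn (fun r : ℝ => X x (t - r)) (Set.Icc 0 t) :=
        (hXc x).comp ((continuous_const.sub continuous_id).continuousOn) hmap
      have hF' : ∀ x'' : Fin n → ℝ, ∀ r ∈ Set.Ico (0:ℝ) t,
          HasDerivWithinAt (fun r : ℝ => X x'' (t - r)) (-f (X x'' (t - r))) (Set.Ici r) r := by
        intro x'' r hr
        have h1 : HasDerivAt (X x'') (f (X x'' (t - r))) (t - r) :=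
          hXode x'' (t - r) (by linarith [hr.2])
        have h2 : HasDerivAt (fun r : ℝ => t - r) (-1) r := (hasDerivAt_id r).const_sub t
        have h3 := h1.scomp r h2
        rw [neg_one_smul] at h3
        exact h3.hasDerivWithinAt
      have hGr := dist_le_of_trajectories_ODE_of_mem (v := fun _ z => -f z) (s := fun _ => Kset)
        (K := L) (fun _ _ => hLipNeg)
        hFc
        (fun r hr => hF' x' r hr)
        (fun r hr => htubeI (t - r) ⟨by linarith [hr.2], by linarith [hr.1]⟩)
        hGc
        (fun r hr => hF' x r hr)
        (fun r hr => hCK (t - r) ⟨by linarith [hr.2], by linarith [hr.1]⟩)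
        (le_of_eq (by rw [sub_zero]))
      have := hGr t ⟨ht0, le_rfl⟩
      rw [sub_self, hX0, hX0, sub_zero] at this
      exact this
  obtain ⟨L, hkey⟩ := hkeyEx
  apply isUnit_det_of_inj
  refine (injective_iff_map_eq_zero _).mpr ?_
  intro v hv
  by_contra hv0
  -- anti-Lipschitz estimate for φ0 near the point X x t of the ball
  have hyball : X x t ∈ Metric.ball (0 : Fin n → ℝ) ε := hstay t le_rfl
  have hTyinj : Function.Injective (fderiv ℝ φ0 (X x t)) := inj_of_isUnit_det (hjac0 _ hyball)
  obtain ⟨c, hc0, hc⟩ := antilip_of_inj _ hTyinj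
  have h2c : (0:ℝ) < 1/(2*c) := by positivity
  obtain ⟨ρ, hρ0, hρ⟩ := Metric.eventually_nhds_iff.mp
    (((hφ0.differentiable one_ne_zero (X x t)).hasFDerivAt.isLittleO).def h2c)
  have hanti : ∀ z, dist z (X x t) < ρ → ‖z - X x t‖ ≤ 2*c*‖φ0 z - φ0 (X x t)‖ := by
    intro z hz
    have h1 := hρ hz
    have h2 := hc (z - X x t)
    have h3 : fderiv ℝ φ0 (X x t) (z - X x t)
        = (φ0 z - φ0 (X x t)) - (φ0 z - φ0 (X x t) - fderiv ℝ φ0 (X x t) (z - X x t)) := by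
      abel
    have h4 : ‖fderiv ℝ φ0 (X x t) (z - X x t)‖
        ≤ ‖φ0 z - φ0 (X x t)‖ + 1/(2*c) * ‖z - X x t‖ := by
      rw [h3]
      refine (norm_sub_le _ _).trans ?_
      gcongr
    set a := ‖φ0 z - φ0 (X x t)‖ with hadef
    set b := ‖z - X x t‖ with hbdef
    set d := ‖fderiv ℝ φ0 (X x t) (z - X x t)‖ with hddef
    have h6 : c * d ≤ c * (a + 1/(2*c) * b) := mul_le_mul_of_nonneg_left h4 hc0.le
    have h7 : c * (a + 1/(2*c) * b) = c * a + 1/2 * b := by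
      field_simp
    linarith
  -- the unit vector in the kernel of the derivative at x
  set vv := ‖v‖⁻¹ • v with hvvdef
  have hvv1 : ‖vv‖ = 1 := norm_smul_inv_norm hv0
  have hTvv : fderiv ℝ φ0 x vv = 0 := by rw [hvvdef, _root_.map_smul, hv, smul_zero]
  set Ec := exp (t • toCLM n A) with hEcdef
  set eL := Real.exp (L * t) with heLdef
  have heL0 : 0 < eL := Real.exp_pos _
  have heL1 : (1:ℝ) ≤ eL := Real.one_le_exp (by positivity)
  have hEc0 : (0:ℝ) ≤ ‖Ec‖ := norm_nonneg _
  set η := 1/(2*(2*c*‖Ec‖*eL + 1)) with hηdef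
  have hη0 : 0 < η := by positivity
  obtain ⟨σ, hσ0, hσ⟩ := Metric.eventually_nhds_iff.mp
    (((hφ0.differentiable one_ne_zero x).hasFDerivAt.isLittleO).def hη0)
  set s := min (min (σ/2) (ρ/(2*eL))) (1/(8*eL)) with hsdef
  have hs0 : 0 < s :=
    lt_min (lt_min (by positivity) (by positivity)) (by positivity)
  set x' := x + s • vv with hx'def
  have hdxx' : dist x' x = s := by
    rw [hx'def, dist_eq_norm, add_sub_cancel_left, norm_smul, hvv1, Real.norm_eq_abs,
      abs_of_pos hs0, mul_one]
  have hseL : s * eL ≤ 1/8 := by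
    have h1 : s ≤ 1/(8*eL) := min_le_right _ _
    calc s * eL ≤ (1/(8*eL)) * eL := mul_le_mul_of_nonneg_right h1 heL0.le
      _ = 1/8 := by field_simp [mul_comm]
  have hsmall : dist x' x * Real.exp (L * t) < 1/2 := by
    rw [hdxx', ← heLdef]
    linarith
  obtain ⟨hup, hlow⟩ := hkey x' hsmall
  have h5 : dist (X x' t) (X x t) ≤ s * eL := by
    have := hup t ⟨ht0, le_rfl⟩
    rwa [hdxx', ← heLdef] at this
  have h6 : dist (X x' t) (X x t) < ρ := by
    have h7 : s ≤ ρ/(2*eL) := le_trans (min_le_left _ _) (min_le_right _ _)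
    have h8 : s * eL ≤ (ρ/(2*eL)) * eL := mul_le_mul_of_nonneg_right h7 heL0.le
    have h9 : (ρ/(2*eL)) * eL = ρ/2 := by field_simp
    nlinarith
  have h9 := hanti _ h6
  have h10 : φ0 (X x' t) - φ0 (X x t) = Ec (φ0 x' - φ0 x) := by
    rw [hK x' t ht0, hK x t ht0, ← map_sub]
  have h11 : ‖φ0 x' - φ0 x‖ ≤ η * s := by
    have hsσ : s ≤ σ/2 := le_trans (min_le_left _ _) (min_le_left _ _)
    have h12 := hσ (show dist x' x < σ by rw [hdxx']; linarith)
    have h13 : x' - x = s • vv := by rw [hx'def, add_sub_cancel_left]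
    rw [h13, _root_.map_smul, hTvv, smul_zero, sub_zero, norm_smul, hvv1, Real.norm_eq_abs,
      abs_of_pos hs0, mul_one] at h12
    exact h12
  have h14 : ‖φ0 (X x' t) - φ0 (X x t)‖ ≤ ‖Ec‖ * (η * s) := by
    rw [h10]
    refine (Ec.le_opNorm _).trans ?_
    exact mul_le_mul_of_nonneg_left h11 hEc0
  have h15 : s ≤ ‖X x' t - X x t‖ * eL := by
    have := hlow
    rwa [hdxx', dist_eq_norm] at this
  have h16 : ‖X x' t - X x t‖ ≤ 2*c*(‖Ec‖*(η*s)) := by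
    refine h9.trans ?_
    have := mul_le_mul_of_nonneg_left h14 (by positivity : (0:ℝ) ≤ 2*c)
    linarith
  have hfinal : s ≤ 2*c*(‖Ec‖*(η*s))*eL := by
    have := mul_le_mul_of_nonneg_right h16 heL0.le
    linarith
  have h17 : 2*c*‖Ec‖*eL*η ≤ 1/2 := by
    rw [hηdef, mul_one_div, div_le_iff₀ (by positivity)]
    nlinarith [mul_nonneg (mul_nonneg (by positivity : (0:ℝ) ≤ 2*c) hEc0) heL0.le]
  nlinarith [hfinal, mul_le_mul_of_nonneg_right h17 hs0.le, hs0]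
end
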